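/- Assume α ≥ 1 - 1/p. Then the infimum of ∫₀¹ |u'(t)|^p t^{αp} dt over all u ∈ C¹([0,1]) with u(0) = 0 and u(1) = 1 equals 0. -/

import Mathlib

open MeasureTheory Real Set

lemma critical_aux (p α : ℝ) (hp : 1 < p) (hα : 1 - 1/p ≤ α) (ε : ℝ) (hε : 0 < ε) :
    ∃ I ∈ { I : ℝ | ∃ u : ℝ → ℝ, ContDiff ℝ 1 u ∧ u 0 = 0 ∧ u 1 = 1 ∧
      I = ∫ t in Ioc (0:ℝ) 1, |deriv u t| ^ p * t ^ (α * p) }, I < ε := by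
  -- choose M
  set K : ℝ := (2 ^ (p-1) / ε) ^ (p-1)⁻¹ with hK
  set M : ℝ := max 1 (K + 1) with hM
  have hM1 : 1 ≤ M := le_max_left _ _
  have hM0 : 0 < M := lt_of_lt_of_le one_pos hM1
  have hp1 : 0 < p - 1 := by linarith
  have hKpos : 0 ≤ K := Real.rpow_nonneg (by positivity) _
  have hMK : K < M := lt_of_lt_of_le (by linarith) (le_max_right _ _)
  set n : ℝ := Real.exp M - 1 with hn
  have hn0 : 0 < n := by
    have : 1 < Real.exp M := by
      rw [show (1:ℝ) = Real.exp 0 by simp]; exact Real.exp_lt_exp.2 hM0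
    simpa [hn] using sub_pos.2 this
  have hden : ∀ t : ℝ, 0 < 1 + n * t ^ 2 := fun t => by positivity
  set u : ℝ → ℝ := fun t => Real.log (1 + n * t ^ 2) / M with hu_def
  have hcd : ContDiff ℝ 1 u := by
    apply ContDiff.div_const
    apply ContDiff.log
    · fun_prop
    · exact fun t => (hden t).ne'
  have hu0 : u 0 = 0 := by simp [hu_def]
  have hu1 : u 1 = 1 := by
    simp only [hu_def, one_pow, mul_one, hn]
    rw [show 1 + (Real.exp M - 1) = Real.exp M by ring, Real.log_exp]
    field_simp
  set d : ℝ → ℝ := fun t => 2 * n * t / ((1 + n * t ^ 2) * M) with hd_def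
  have hderiv : ∀ t : ℝ, HasDerivAt u (d t) t := by
    intro t
    have h1 : HasDerivAt (fun t : ℝ => 1 + n * t ^ 2) (n * (2 * t)) t := by
      simpa using ((hasDerivAt_pow 2 t).const_mul n).const_add 1
    have h2 := (h1.log (hden t).ne').div_const M
    refine h2.congr_deriv ?_
    show _ = 2 * n * t / ((1 + n * t ^ 2) * M)
    field_simp
  have hderiv_eq : deriv u = d := funext fun t => (hderiv t).deriv
  refine ⟨_, ⟨u, hcd, hu0, hu1, rfl⟩, ?_⟩
  rw [hderiv_eq]
  set g : ℝ → ℝ := fun t => (2 ^ (p-1) / M ^ p) * (2 * n * t / (1 + n * t ^ 2)) with hg_def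
  have hgcont : Continuous g := by
    apply Continuous.mul continuous_const
    exact Continuous.div (by fun_prop) (by fun_prop) (fun t => (hden t).ne')
  have hfcont : Continuous fun t : ℝ => |d t| ^ p * t ^ (α * p) := by
    have hαp : 0 ≤ α * p := by
      have : p - 1 ≤ α * p := by
        have := mul_le_mul_of_nonneg_right hα (by linarith : (0:ℝ) ≤ p)
        calc p - 1 = (1 - 1/p) * p := by field_simp
        _ ≤ α * p := this
      linarith
    apply Continuous.mul
    · have hd_cont : Continuous d := by
        apply Continuous.div (by fun_prop) (by fun_prop)
        exact fun t => (mul_pos (hden t) hM0).ne'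
      exact (Real.continuous_rpow_const (by linarith : (0:ℝ) ≤ p)).comp hd_cont.abs
    · exact Real.continuous_rpow_const hαp
  -- integrability
  have hf_int : IntegrableOn (fun t : ℝ => |d t| ^ p * t ^ (α * p)) (Ioc 0 1) :=
    hfcont.integrableOn_Ioc
  have hg_int : IntegrableOn g (Ioc 0 1) := hgcont.integrableOn_Ioc
  -- pointwise bound
  have hp1' : p - 1 ≤ α * p := by
    have := mul_le_mul_of_nonneg_right hα (by linarith : (0:ℝ) ≤ p)
    calc p - 1 = (1 - 1/p) * p := by field_simp
    _ ≤ α * p := this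
  have h2p : (0:ℝ) < 2 ^ (p-1) := Real.rpow_pos_of_pos two_pos _
  have hmono : ∀ t ∈ Ioc (0:ℝ) 1, |d t| ^ p * t ^ (α * p) ≤ g t := by
    rintro t ⟨ht0, ht1⟩
    set A : ℝ := 2 * n * t / (1 + n * t ^ 2) with hA_def
    have hA0 : 0 < A := by
      apply div_pos (by positivity) (hden t)
    have hdA : d t = A / M := by rw [hd_def, hA_def]; field_simp
    have habs : |d t| = A / M := by rw [hdA, abs_of_pos (div_pos hA0 hM0)]
    rw [habs, Real.div_rpow hA0.le hM0.le]
    simp only [hg_def, ← hA_def]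
    have key : A ^ p * t ^ (α * p) ≤ 2 ^ (p-1) * A := by
      have step1 : t ^ (α * p) ≤ t ^ (p - 1) :=
        Real.rpow_le_rpow_of_exponent_ge ht0 ht1 hp1'
      have step2 : A ^ p * t ^ (p-1) = A * (A * t) ^ (p-1) := by
        rw [show p = 1 + (p-1) by ring, Real.rpow_add hA0, Real.rpow_one,
          Real.mul_rpow hA0.le ht0.le]
        ring_nf
      have step3 : (A * t) ^ (p-1) ≤ 2 ^ (p-1) := by
        apply Real.rpow_le_rpow (by positivity) _ (by linarith)
        have : A * t = 2 * (n * t ^ 2) / (1 + n * t ^ 2) := by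
          rw [hA_def]; field_simp
        rw [this]
        rw [div_le_iff₀ (hden t)]
        nlinarith [hden t, sq_nonneg t, hn0.le]
      calc A ^ p * t ^ (α * p) ≤ A ^ p * t ^ (p-1) := by
            apply mul_le_mul_of_nonneg_left step1 (Real.rpow_nonneg hA0.le _)
        _ = A * (A * t) ^ (p-1) := step2
        _ ≤ A * 2 ^ (p-1) := by
            apply mul_le_mul_of_nonneg_left step3 hA0.le
        _ = 2 ^ (p-1) * A := mul_comm _ _
    rw [show 2 ^ (p-1) / M ^ p * A = (2 ^ (p-1) * A) / M ^ p by ring]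
    rw [div_mul_eq_mul_div]
    exact (div_le_div_iff_of_pos_right (show (0:ℝ) < M ^ p by positivity)).mpr key
  -- value of ∫ g
  have hFTC : ∫ t in Ioc (0:ℝ) 1, 2 * n * t / (1 + n * t ^ 2) = M := by
    have hd2 : ∀ t ∈ uIcc (0:ℝ) 1, HasDerivAt (fun t : ℝ => Real.log (1 + n * t ^ 2))
        (2 * n * t / (1 + n * t ^ 2)) t := by
      intro t _
      have h1 : HasDerivAt (fun t : ℝ => 1 + n * t ^ 2) (n * (2 * t)) t := by
        simpa using ((hasDerivAt_pow 2 t).const_mul n).const_add 1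
      have h2 := h1.log (hden t).ne'
      convert h2 using 1
      field_simp
    have hint : IntervalIntegrable (fun t : ℝ => 2 * n * t / (1 + n * t ^ 2)) volume 0 1 := by
      apply Continuous.intervalIntegrable
      exact Continuous.div (by fun_prop) (by fun_prop) (fun t => (hden t).ne')
    have := intervalIntegral.integral_eq_sub_of_hasDerivAt hd2 hint
    rw [intervalIntegral.integral_of_le zero_le_one] at this
    rw [this]
    simp only [one_pow, mul_one, mul_zero]
    rw [hn, show 1 + (Real.exp M - 1) = Real.exp M by ring, Real.log_exp]
    norm_num
  have hgval : ∫ t in Ioc (0:ℝ) 1, g t = (2 ^ (p-1) / M ^ p) * M := by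
    rw [hg_def]
    rw [MeasureTheory.integral_const_mul]
    rw [hFTC]
  -- final estimate
  have hbound : (∫ t in Ioc (0:ℝ) 1, |d t| ^ p * t ^ (α * p)) ≤ (2 ^ (p-1) / M ^ p) * M := by
    rw [← hgval]
    exact setIntegral_mono_on hf_int hg_int measurableSet_Ioc hmono
  refine lt_of_le_of_lt hbound ?_
  have hMp : M ^ p = M ^ (p-1) * M := by
    rw [← Real.rpow_add_one hM0.ne' (p-1)]; ring_nf
  have hMp1pos : 0 < M ^ (p-1) := Real.rpow_pos_of_pos hM0 _
  have hval : (2 ^ (p-1) / M ^ p) * M = 2 ^ (p-1) / M ^ (p-1) := by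
    rw [hMp]; field_simp
  rw [hval]
  have hKval : K ^ (p-1) = 2 ^ (p-1) / ε := by
    rw [hK]; exact Real.rpow_inv_rpow (by positivity) (by linarith)
  have hMgt : 2 ^ (p-1) / ε < M ^ (p-1) := by
    rw [← hKval]; exact Real.rpow_lt_rpow hKpos hMK hp1
  calc 2 ^ (p-1) / M ^ (p-1) < 2 ^ (p-1) / (2 ^ (p-1) / ε) :=
        div_lt_div_of_pos_left h2p (by positivity) hMgt
    _ = ε := by field_simp


/-- In the critical case `α ≥ 1 - 1/p`, the infimum of the weighted Dirichlet energy over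
`W = {u ∈ C¹([0,1]) : u 0 = 0, u 1 = 1}` equals `0`. -/
theorem critical_inf_zero (p α : ℝ) (hp : 1 < p) (hα : 1 - 1/p ≤ α) :
    sInf { I : ℝ | ∃ u : ℝ → ℝ, ContDiff ℝ 1 u ∧ u 0 = 0 ∧ u 1 = 1 ∧
      I = ∫ t in Ioc (0:ℝ) 1, |deriv u t| ^ p * t ^ (α * p) } = 0 := by
  set S := { I : ℝ | ∃ u : ℝ → ℝ, ContDiff ℝ 1 u ∧ u 0 = 0 ∧ u 1 = 1 ∧
      I = ∫ t in Ioc (0:ℝ) 1, |deriv u t| ^ p * t ^ (α * p) } with hS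
  have hne : S.Nonempty := ⟨_, ⟨id, contDiff_id, rfl, rfl, rfl⟩⟩
  have hlb : ∀ I ∈ S, (0:ℝ) ≤ I := by
    rintro I ⟨u, -, -, -, rfl⟩
    apply setIntegral_nonneg measurableSet_Ioc
    intro t ht
    have h1 : (0:ℝ) ≤ |deriv u t| ^ p := Real.rpow_nonneg (abs_nonneg _) _
    have h2 : (0:ℝ) ≤ t ^ (α * p) := Real.rpow_nonneg ht.1.le _
    exact mul_nonneg h1 h2
  have hbdd : BddBelow S := ⟨0, hlb⟩
  refine le_antisymm ?_ (le_csInf hne hlb)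
  rw [show (0:ℝ) = 0 by rfl]
  by_contra h
  push_neg at h
  obtain ⟨I, hI, hIlt⟩ := critical_aux p α hp hα (sInf S) (lt_of_not_ge (by simpa using h))
  exact absurd (csInf_le hbdd hI) (not_le.2 hIlt)
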